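/- For M ≥ 2⁹, the annulus A = S¹ × [-2,2] is contained in the interior of W(A), where W = s ∘ σ with σ(x,y) = (x - 2πy, y) and s(x,y) = (x, My - (M-1)sin x). -/

import Mathlib

/-- The shear map σ(x,y) = (x - 2πy mod 2π, y). -/
noncomputable def shear : Real.Angle × ℝ → Real.Angle × ℝ :=
  fun p => (p.1 - ((2 * Real.pi * p.2 : ℝ) : Real.Angle), p.2)

/-- The map s(x,y) = (x, M y - (M-1) sin x). -/
noncomputable def smap (M : ℝ) : Real.Angle × ℝ → Real.Angle × ℝ :=
  fun p => (p.1, M * p.2 - (M - 1) * p.1.sin)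

/-- The annulus A = S¹ × [-2,2]. -/
def annulusA : Set (Real.Angle × ℝ) := Set.univ ×ˢ Set.Icc (-2 : ℝ) 2

lemma angle_sin_le_one (a : Real.Angle) : a.sin ≤ 1 := by
  induction a using Real.Angle.induction_on
  rw [Real.Angle.sin_coe]
  exact Real.sin_le_one _

lemma neg_one_le_angle_sin (a : Real.Angle) : -1 ≤ a.sin := by
  induction a using Real.Angle.induction_on
  rw [Real.Angle.sin_coe]
  exact Real.neg_one_le_sin _

/-- For M ≥ 2⁹, the annulus A is contained in the interior of W(A), W = s ∘ σ. -/
theorem annulus_subset_interior_Wmap_image (M : ℝ) (hM : M ≥ 2 ^ 9) :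
    annulusA ⊆ interior ((smap M ∘ shear) '' annulusA) := by
  have hM0 : (0 : ℝ) < M := by norm_num at hM ⊢; linarith
  have hopen : IsOpen ((Set.univ : Set Real.Angle) ×ˢ Set.Ioo (-3 : ℝ) 3) :=
    isOpen_univ.prod isOpen_Ioo
  have hsub : (Set.univ : Set Real.Angle) ×ˢ Set.Ioo (-3 : ℝ) 3 ⊆
      (smap M ∘ shear) '' annulusA := by
    rintro ⟨a, b⟩ ⟨-, hb1, hb2⟩
    have hs1 := angle_sin_le_one a
    have hs2 := neg_one_le_angle_sin a
    set y : ℝ := (b + (M - 1) * a.sin) / M with hy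
    have hyle : y ≤ 2 := by
      rw [hy, div_le_iff₀ hM0]
      nlinarith
    have hyge : -2 ≤ y := by
      rw [hy, le_div_iff₀ hM0]
      nlinarith
    refine ⟨(a + ((2 * Real.pi * y : ℝ) : Real.Angle), y), ⟨trivial, hyge, hyle⟩, ?_⟩
    simp only [Function.comp_apply, shear, smap, add_sub_cancel_right]
    have : M * y - (M - 1) * a.sin = b := by
      rw [hy]; field_simp; ring
    rw [this]
  exact fun p hp =>
    interior_maximal hsub hopen ⟨trivial, by constructor <;> [linarith [hp.2.1]; linarith [hp.2.2]]⟩
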